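/- Let $(J,F)$ be a Hermitian structure with $J$ abelian on a $2n$-dimensional Lie algebra $\mathfrak{g}$, with adapted orthonormal basis $\{e_1,\ldots,e_{2n}\}$. Then the Bismut connection $1$-forms are given by $\sigma^i_j=-\sum_{k=1}^{2n}c^k_{ij}e^k$, and moreover $\sigma^{2i}_{2j}=\sigma^{2i-1}_{2j-1}$ and $\sigma^{2i-1}_{2j}=-\sigma^{2i}_{2j-1}$ for all $i,j=1,\ldots,n$. -/

import Mathlib

/-- On a `2n`-dimensional Lie algebra with Hermitian structure `(J, F)`, `J` abelian,
with adapted orthonormal basis (indexed by `Fin n × Bool`, `(i, false) ↦ e_{2i-1}`,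
`(i, true) ↦ e_{2i}`), the Bismut connection 1-forms `σ^i_j(eₖ) = g(∇_{eₖ} eⱼ, eᵢ)`
satisfy `σ^i_j = -∑ₖ c^k_{ij} e^k`, i.e. `σ^i_j(eₖ) = e^k(⁅eᵢ, eⱼ⁆)`, together with
`σ^{2i}_{2j} = σ^{2i-1}_{2j-1}` and `σ^{2i-1}_{2j} = -σ^{2i}_{2j-1}`. -/
theorem bismut_connection_one_forms {L : Type*} [LieRing L] [LieAlgebra ℝ L] (n : ℕ)
    (g : L →ₗ[ℝ] L →ₗ[ℝ] ℝ) (hsymm : ∀ x y, g x y = g y x)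
    (J : L →ₗ[ℝ] L) (hJ2 : ∀ x, J (J x) = -x)
    (hab : ∀ x y : L, ⁅J x, J y⁆ = ⁅x, y⁆)
    (hcomp : ∀ x y, g (J x) (J y) = g x y)
    (b : Module.Basis (Fin n × Bool) ℝ L)
    (hadapt : ∀ k : Fin n, J (b (k, false)) = -b (k, true))
    (honb : ∀ i j, g (b i) (b j) = if i = j then (1 : ℝ) else 0)
    (F : L → L → ℝ) (hF : ∀ X Y, F X Y = g X (J Y))
    (dF : L → L → L → ℝ)
    (hdF : ∀ X Y Z, dF X Y Z = -F ⁅X, Y⁆ Z + F ⁅X, Z⁆ Y - F ⁅Y, Z⁆ X)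
    -- Levi-Civita connection via the Koszul formula
    (nabG : L → L → L)
    (hKoszul : ∀ X Y Z : L,
      2 * g (nabG X Y) Z = g ⁅X, Y⁆ Z - g ⁅Y, Z⁆ X + g ⁅Z, X⁆ Y)
    -- the totally skew-symmetric torsion `T = JdF`
    (T : L → L → L)
    (hT : ∀ X Y Z : L, g (T X Y) Z = -dF (J X) (J Y) (J Z))
    -- the Bismut connection `∇ = ∇^g + (1/2) T`
    (nab : L → L → L)
    (hnab : ∀ X Y, nab X Y = nabG X Y + (1 / 2 : ℝ) • T X Y) :
    (∀ i j k : Fin n × Bool, g (nab (b k) (b j)) (b i) = b.coord k ⁅b i, b j⁆) ∧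
      (∀ (i j : Fin n) (X : L),
        g (nab X (b (j, true))) (b (i, true)) = g (nab X (b (j, false))) (b (i, false))) ∧
      (∀ (i j : Fin n) (X : L),
        g (nab X (b (j, true))) (b (i, false)) =
          -g (nab X (b (j, false))) (b (i, true))) := by

  -- Key formula: g(∇_X Y, Z) = g([Z,Y], X)
  have key : ∀ X Y Z : L, g (nab X Y) Z = g ⁅Z, Y⁆ X := by
    intro X Y Z
    have hT' : g (T X Y) Z = -g ⁅X, Y⁆ Z + g ⁅X, Z⁆ Y - g ⁅Y, Z⁆ X := by
      rw [hT, hdF, hab, hab, hab, hF, hF, hF, hJ2, hJ2, hJ2]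
      simp
      ring
    have hK := hKoszul X Y Z
    have h1 : g ⁅Z, X⁆ Y = -g ⁅X, Z⁆ Y := by
      have hx : (⁅Z, X⁆ : L) = -⁅X, Z⁆ := (lie_skew Z X).symm
      rw [hx, map_neg, LinearMap.neg_apply]
    have h2 : g ⁅Z, Y⁆ X = -g ⁅Y, Z⁆ X := by
      have hx : (⁅Z, Y⁆ : L) = -⁅Y, Z⁆ := (lie_skew Z Y).symm
      rw [hx, map_neg, LinearMap.neg_apply]
    have hsplit : g (nab X Y) Z = g (nabG X Y) Z + (1 / 2 : ℝ) * g (T X Y) Z := by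
      rw [hnab]
      simp [map_add, LinearMap.add_apply, map_smul, LinearMap.smul_apply, smul_eq_mul]
    rw [hsplit, hT', h2]
    linarith
  have hcoord : ∀ (k : Fin n × Bool) (v : L), b.coord k v = g v (b k) := by
    intro k
    suffices h : b.coord k = (g.flip (b k) : L →ₗ[ℝ] ℝ) by
      intro v; rw [h]; rfl
    apply b.ext
    intro j
    simp [Module.Basis.coord_apply, Module.Basis.repr_self, Finsupp.single_apply, honb,
      LinearMap.flip_apply]
  have htrue : ∀ k : Fin n, b (k, true) = -J (b (k, false)) := by
    intro k; rw [hadapt]; simp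
  have habJ : ∀ x y : L, ⁅J x, y⁆ = -⁅x, J y⁆ := by
    intro x y
    have h := hab x (J y)
    rw [hJ2] at h
    simp only [lie_neg] at h
    rw [← h, neg_neg]
  refine ⟨?_, ?_, ?_⟩
  · intro i j k
    rw [key, hcoord]
  · intro i j X
    rw [key, key, htrue i, htrue j]
    simp [hab]
  · intro i j X
    rw [key, key, htrue i, htrue j]
    have h3 : (⁅b (i, false), -J (b (j, false))⁆ : L)
        = -⁅-J (b (i, false)), b (j, false)⁆ := by
      rw [lie_neg, neg_lie, neg_neg, habJ]
    rw [h3, map_neg, LinearMap.neg_apply]
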